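/- Let (V, g) be an n-dimensional scalar product space with n ≥ 3 and let C be an algebraic curvature tensor on V. Then the Weyl curvature tensor W_C of C is an algebraic curvature tensor that is trace-free, i.e. tr_g^{1,4}(W_C) = 0. Moreover, if C itself is trace-free, i.e. tr_g^{1,4}(C) = 0, then W_C = C. -/

import Mathlib

open ExteriorAlgebra


/-- `C` is an algebraic curvature tensor: it is multilinear and satisfies the
symmetries of the Riemann curvature tensor. -/
def IsACT {V : Type} [AddCommGroup V] [Module ℝ V] (C : V → V → V → V → ℝ) : Prop :=
  ((∀ (a : ℝ) (u u' v x y : V), C (a • u + u') v x y = a * C u v x y + C u' v x y) ∧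
   (∀ (a : ℝ) (u v v' x y : V), C u (a • v + v') x y = a * C u v x y + C u v' x y) ∧
   (∀ (a : ℝ) (u v x x' y : V), C u v (a • x + x') y = a * C u v x y + C u v x' y) ∧
   (∀ (a : ℝ) (u v x y y' : V), C u v x (a • y + y') = a * C u v x y + C u v x y')) ∧
  (∀ u v x y, C u v x y = -C v u x y) ∧
  (∀ u v x y, C u v x y = -C u v y x) ∧
  (∀ u v x y, C u v x y = C x y u v) ∧
  (∀ u v x y, C u v x y + C x u v y + C v x u y = 0)

/-- The Ricci curvature of `C`: the `g`-trace over the first and fourth slots, computed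
using a basis `b` with `g`-dual family `d`. -/
noncomputable def ricci {V : Type} [AddCommGroup V] [Module ℝ V] {n : ℕ}
    (C : V → V → V → V → ℝ) (b d : Fin n → V) : V → V → ℝ :=
  fun x y => ∑ j, C (d j) x y (b j)

/-- The scalar curvature of `C`. -/
noncomputable def scalCurv {V : Type} [AddCommGroup V] [Module ℝ V] {n : ℕ}
    (C : V → V → V → V → ℝ) (b d : Fin n → V) : ℝ :=
  ∑ j, ricci C b d (d j) (b j)

/-- The Schouten tensor of `C`. -/
noncomputable def schouten {V : Type} [AddCommGroup V] [Module ℝ V] {n : ℕ}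
    (g : LinearMap.BilinForm ℝ V) (C : V → V → V → V → ℝ) (b d : Fin n → V) : V → V → ℝ :=
  fun x y => (1/((n : ℝ) - 2)) *
    (ricci C b d x y - (scalCurv C b d / (2*((n : ℝ) - 1))) * g x y)

/-- The Kulkarni–Nomizu product of two symmetric bilinear forms. -/
def kulkarniNomizu {V : Type} [AddCommGroup V] [Module ℝ V]
    (h k : V → V → ℝ) : V → V → V → V → ℝ :=
  fun u v x y => h u y * k v x + h v x * k u y - h u x * k v y - h v y * k u x

/-- The Weyl curvature tensor of `C`: `W_C = C - P_C ⊼ g`. -/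
noncomputable def weyl {V : Type} [AddCommGroup V] [Module ℝ V] {n : ℕ}
    (g : LinearMap.BilinForm ℝ V) (C : V → V → V → V → ℝ) (b d : Fin n → V) :
    V → V → V → V → ℝ :=
  fun u v x y => C u v x y -
    kulkarniNomizu (schouten g C b d) (fun a b' => g a b') u v x y

/-- A map `T` that is linear (in the combined `a • u + u'` sense) pulls out finite
sums of scalar multiples. -/
lemma sum_smul_of_lin {V : Type} [AddCommGroup V] [Module ℝ V] (T : V → ℝ)
    (hT : ∀ (a : ℝ) (u u' : V), T (a • u + u') = a * T u + T u')
    {ι : Type*} (s : Finset ι) (c : ι → ℝ) (w : ι → V) :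
    T (∑ i ∈ s, c i • w i) = ∑ i ∈ s, c i * T (w i) := by
  have h0 : T 0 = 0 := by
    have h := hT (-1) 0 0
    simp only [neg_smul, one_smul, add_zero, smul_zero, neg_mul, one_mul] at h
    linarith
  induction s using Finset.cons_induction with
  | empty => simpa using h0
  | cons a s ha ih =>
      rw [Finset.sum_cons, Finset.sum_cons, ← ih]
      exact hT _ _ _

/-- On an `n`-dimensional scalar product space with `n ≥ 3`, the Weyl
curvature tensor `W_C` of an algebraic curvature tensor `C` is an algebraic curvature
tensor which is trace-free; moreover if `C` is itself trace-free then `W_C = C`. -/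
theorem weyl_isACT_traceFree
    {V : Type} [AddCommGroup V] [Module ℝ V] {n : ℕ} (hn : 3 ≤ n)
    (g : LinearMap.BilinForm ℝ V)
    (hgsymm : ∀ x y, g x y = g y x)
    (hgnd : ∀ x : V, (∀ y, g x y = 0) → x = 0)
    (b : Module.Basis (Fin n) ℝ V) (d : Fin n → V)
    (hd : ∀ i j, g (b i) (d j) = if i = j then 1 else 0)
    (C : V → V → V → V → ℝ) (hC : IsACT C) :
    IsACT (weyl g C (fun i => b i) d) ∧
    (∀ x y : V, ∑ j, weyl g C (fun i => b i) d (d j) x y (b j) = 0) ∧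
    ((∀ x y : V, ∑ j, C (d j) x y (b j) = 0) → weyl g C (fun i => b i) d = C) := by
  obtain ⟨⟨hm1, hm2, hm3, hm4⟩, ha1, ha2, hpair, hbianchi⟩ := hC
  have hn3 : (3 : ℝ) ≤ (n : ℝ) := by exact_mod_cast hn
  have hn2 : ((n : ℝ) - 2) ≠ 0 := ne_of_gt (by linarith)
  have hn1 : (2 * ((n : ℝ) - 1)) ≠ 0 := ne_of_gt (by linarith)
  -- g linearity in each slot
  have hglin1 : ∀ (a : ℝ) (u u' v : V), g (a • u + u') v = a * g u v + g u' v := by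
    intro a u u' v; simp
  have hglin2 : ∀ (a : ℝ) (u v v' : V), g u (a • v + v') = a * g u v + g u v' := by
    intro a u v v'; simp
  have hdsym : ∀ i j, g (d j) (b i) = if i = j then 1 else 0 := by
    intro i j; rw [hgsymm]; exact hd i j
  -- nondegeneracy via the basis
  have hgnd2 : ∀ v : V, (∀ i, g (b i) v = 0) → v = 0 := by
    intro v hv
    apply hgnd
    intro y
    rw [hgsymm, ← b.sum_repr y]
    rw [sum_smul_of_lin (fun w => g w v) (fun a u u' => hglin1 a u u' v) _ _ _]
    simp [hv]
  -- expansion of any vector in the `d` family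
  have hrepr : ∀ x : V, x = ∑ j, g x (b j) • d j := by
    intro x
    have h : ∀ i, g (b i) (x - ∑ j, g x (b j) • d j) = 0 := by
      intro i
      rw [map_sub, map_sum]
      simp only [map_smul, smul_eq_mul, hd, mul_ite, mul_one, mul_zero]
      rw [Finset.sum_ite_eq]
      simp [hgsymm x (b i)]
    have h2 := hgnd2 _ h
    rw [← sub_eq_zero]; exact h2
  have hgnd3 : ∀ v : V, (∀ k, g (d k) v = 0) → v = 0 := by
    intro v hv
    apply hgnd2
    intro i
    conv_lhs => rw [hrepr (b i)]
    rw [sum_smul_of_lin (fun w => g w v) (fun a u u' => hglin1 a u u' v) _ _ _]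
    simp [hv]
  -- expansion of any vector in the `b` basis with `g`-coefficients
  have hrepr2 : ∀ y : V, y = ∑ j, g (d j) y • b j := by
    intro y
    have h : ∀ k, g (d k) (y - ∑ j, g (d j) y • b j) = 0 := by
      intro k
      rw [map_sub, map_sum]
      simp only [map_smul, smul_eq_mul, hdsym, mul_ite, mul_one, mul_zero]
      rw [Finset.sum_ite_eq']
      simp
    have h2 := hgnd3 _ h
    rw [← sub_eq_zero]; exact h2
  -- reversal symmetry of C
  have hrev : ∀ u v x y, C u v x y = C y x v u := by
    intro u v x y
    rw [hpair u v x y, ha1 x y u v, ha2 y x u v]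
    ring
  -- linearity of ricci
  have hric1 : ∀ (a : ℝ) (x x' y : V), ricci C (fun i => b i) d (a • x + x') y
      = a * ricci C (fun i => b i) d x y + ricci C (fun i => b i) d x' y := by
    intro a x x' y
    simp only [ricci]
    rw [Finset.sum_congr rfl fun j _ => hm2 a (d j) x x' y (b j),
      Finset.sum_add_distrib, Finset.mul_sum]
  have hric2 : ∀ (a : ℝ) (x y y' : V), ricci C (fun i => b i) d x (a • y + y')
      = a * ricci C (fun i => b i) d x y + ricci C (fun i => b i) d x y' := by
    intro a x y y'
    simp only [ricci]
    rw [Finset.sum_congr rfl fun j _ => hm3 a (d j) x y y' (b j),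
      Finset.sum_add_distrib, Finset.mul_sum]
  -- symmetry of ricci
  have hricsymm : ∀ x y, ricci C (fun i => b i) d x y = ricci C (fun i => b i) d y x := by
    intro x y
    have e1 : ∀ j, C (d j) x y (b j) = ∑ i, g (d i) (d j) * C (b j) y x (b i) := by
      intro j
      rw [hrev (d j) x y (b j)]
      conv_lhs => rw [hrepr2 (d j)]
      exact sum_smul_of_lin (fun w => C (b j) y x w)
        (fun a u u' => hm4 a (b j) y x u u') _ _ _
    have e2 : ∀ j, C (d j) y x (b j) = ∑ i, g (d i) (d j) * C (b i) y x (b j) := by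
      intro j
      conv_lhs => rw [hrepr2 (d j)]
      exact sum_smul_of_lin (fun w => C w y x (b j))
        (fun a u u' => hm1 a u u' y x (b j)) _ _ _
    simp only [ricci]
    rw [Finset.sum_congr rfl fun j _ => e1 j, Finset.sum_congr rfl fun j _ => e2 j,
      Finset.sum_comm]
    refine Finset.sum_congr rfl fun j _ => Finset.sum_congr rfl fun i _ => ?_
    rw [hgsymm (d j) (d i)]
  -- schouten linearity and symmetry
  have hP1 : ∀ (a : ℝ) (x x' y : V), schouten g C (fun i => b i) d (a • x + x') y
      = a * schouten g C (fun i => b i) d x y + schouten g C (fun i => b i) d x' y := by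
    intro a x x' y
    simp only [schouten]
    rw [hric1 a x x' y, hglin1 a x x' y]
    ring
  have hP2 : ∀ (a : ℝ) (x y y' : V), schouten g C (fun i => b i) d x (a • y + y')
      = a * schouten g C (fun i => b i) d x y + schouten g C (fun i => b i) d x y' := by
    intro a x y y'
    simp only [schouten]
    rw [hric2 a x y y', hglin2 a x y y']
    ring
  have hPsymm : ∀ x y, schouten g C (fun i => b i) d x y
      = schouten g C (fun i => b i) d y x := by
    intro x y
    simp only [schouten]
    rw [hricsymm x y, hgsymm x y]
  refine ⟨⟨⟨?_, ?_, ?_, ?_⟩, ?_, ?_, ?_, ?_⟩, ?_, ?_⟩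
  · -- multilinearity in slot 1
    intro a u u' v x y
    simp only [weyl, kulkarniNomizu]
    rw [hm1 a u u' v x y, hP1 a u u' y, hP1 a u u' x, hglin1 a u u' y, hglin1 a u u' x]
    ring
  · -- slot 2
    intro a u v v' x y
    simp only [weyl, kulkarniNomizu]
    rw [hm2 a u v v' x y, hP1 a v v' x, hP1 a v v' y, hglin1 a v v' x, hglin1 a v v' y]
    ring
  · -- slot 3
    intro a u v x x' y
    simp only [weyl, kulkarniNomizu]
    rw [hm3 a u v x x' y, hP2 a v x x', hP2 a u x x', hglin2 a v x x', hglin2 a u x x']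
    ring
  · -- slot 4
    intro a u v x y y'
    simp only [weyl, kulkarniNomizu]
    rw [hm4 a u v x y y', hP2 a u y y', hP2 a v y y', hglin2 a u y y', hglin2 a v y y']
    ring
  · -- antisymmetry in first pair
    intro u v x y
    simp only [weyl, kulkarniNomizu]
    rw [ha1 u v x y]
    ring
  · -- antisymmetry in second pair
    intro u v x y
    simp only [weyl, kulkarniNomizu]
    rw [ha2 u v x y]
    ring
  · -- pair symmetry
    intro u v x y
    simp only [weyl, kulkarniNomizu]
    rw [hpair u v x y, hPsymm x v, hPsymm y u, hPsymm x u, hPsymm y v,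
      hgsymm y u, hgsymm x v, hgsymm y v, hgsymm x u]
    ring
  · -- first Bianchi identity
    intro u v x y
    simp only [weyl, kulkarniNomizu]
    have hb := hbianchi u v x y
    rw [hPsymm x v, hPsymm x u, hPsymm v u, hgsymm x v, hgsymm x u, hgsymm v u]
    linarith
  · -- trace-free
    intro x y
    have hB' : ∑ j, schouten g C (fun i => b i) d x y * g (d j) (b j)
        = (n : ℝ) * schouten g C (fun i => b i) d x y := by
      simp [hdsym, Finset.sum_const, Finset.card_univ, mul_comm]
    have hC3 : ∑ j, schouten g C (fun i => b i) d (d j) y * g x (b j)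
        = schouten g C (fun i => b i) d x y := by
      conv_rhs => rw [hrepr x]
      rw [sum_smul_of_lin (fun w => schouten g C (fun i => b i) d w y)
        (fun a u u' => hP1 a u u' y) _ _ _]
      exact Finset.sum_congr rfl fun j _ => mul_comm _ _
    have hC4 : ∑ j, schouten g C (fun i => b i) d x (b j) * g (d j) y
        = schouten g C (fun i => b i) d x y := by
      conv_rhs => rw [hrepr2 y]
      rw [sum_smul_of_lin (fun w => schouten g C (fun i => b i) d x w)
        (fun a u u' => hP2 a x u u') _ _ _]
      exact Finset.sum_congr rfl fun j _ => mul_comm _ _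
    have htrP : ∑ j, schouten g C (fun i => b i) d (d j) (b j)
        = scalCurv C (fun i => b i) d / (2 * ((n : ℝ) - 1)) := by
      have e : ∀ j, schouten g C (fun i => b i) d (d j) (b j)
          = (1/((n : ℝ)-2)) * ricci C (fun i => b i) d (d j) (b j)
            - (1/((n : ℝ)-2)) * (scalCurv C (fun i => b i) d / (2*((n : ℝ)-1))) := by
        intro j
        have h1 : (g (d j)) (b j) = 1 := by rw [hdsym]; simp
        simp only [schouten, h1]
        ring
      rw [Finset.sum_congr rfl fun j _ => e j, Finset.sum_sub_distrib,
        ← Finset.mul_sum, Finset.sum_const, Finset.card_univ, Fintype.card_fin,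
        nsmul_eq_mul]
      have hS : (∑ j, ricci C (fun i => b i) d (d j) (b j)) = scalCurv C (fun i => b i) d := rfl
      rw [hS]
      have hn1' : ((n : ℝ) - 1) ≠ 0 := by linarith
      field_simp
      ring
    have hstep : ∑ j, weyl g C (fun i => b i) d (d j) x y (b j)
        = ricci C (fun i => b i) d x y
          - ∑ j, kulkarniNomizu (schouten g C (fun i => b i) d)
              (fun a b' => g a b') (d j) x y (b j) := by
      simp only [weyl]
      rw [Finset.sum_sub_distrib]
      rfl
    have hK : ∑ j, kulkarniNomizu (schouten g C (fun i => b i) d)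
        (fun a b' => g a b') (d j) x y (b j)
        = (∑ j, schouten g C (fun i => b i) d (d j) (b j)) * g x y
          + (n : ℝ) * schouten g C (fun i => b i) d x y
          - schouten g C (fun i => b i) d x y
          - schouten g C (fun i => b i) d x y := by
      simp only [kulkarniNomizu]
      rw [Finset.sum_sub_distrib, Finset.sum_sub_distrib, Finset.sum_add_distrib,
        hB', hC3, hC4, ← Finset.sum_mul]
    rw [hstep, hK, htrP]
    simp only [schouten]
    field_simp
    ring
  · -- trace-free C implies weyl = C
    intro h
    have hric0 : ∀ x y, ricci C (fun i => b i) d x y = 0 := h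
    have hS0 : scalCurv C (fun i => b i) d = 0 := by
      simp [scalCurv, hric0]
    have hP0 : ∀ x y, schouten g C (fun i => b i) d x y = 0 := by
      intro x y
      simp [schouten, hric0, hS0]
    funext u v x y
    simp [weyl, kulkarniNomizu, hP0]
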